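/- Let K ⊆ ℝⁿ and A ⊆ ℝᵐ with dim̄_B(K) + dim_H(A) < m. Then for every continuous f : K → ℝᵐ and every ε > 0 there exists a polynomial mapping p : ℝⁿ → ℝᵐ such that p(x) ∉ A for all x ∈ K and max_{x ∈ K} ‖f(x) − p(x)‖ < ε. -/

import Mathlib

open Filter Metric Set ENNReal Topology NNReal MeasureTheory

/-- Smallest number of `ε`-balls needed to cover `s` (`⊤` if no finite cover exists). -/
noncomputable def coverNum {X : Type*} [PseudoMetricSpace X] (s : Set X) (ε : ℝ) : ℕ∞ :=
  sInf {m : ℕ∞ | ∃ t : Finset X, (t.card : ℕ∞) = m ∧ s ⊆ ⋃ x ∈ t, Metric.ball x ε}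

/-- Upper box-counting (Minkowski) dimension. -/
noncomputable def upperBoxDim {X : Type*} [PseudoMetricSpace X] (s : Set X) : ℝ≥0∞ :=
  Filter.limsup
    (fun ε : ℝ =>
      if coverNum s ε = ⊤ then (⊤ : ℝ≥0∞)
      else ENNReal.ofReal (Real.log ((coverNum s ε).toNat) / Real.log ε⁻¹))
    (nhdsWithin 0 (Set.Ioi 0))

lemma exists_cover_of_upperBoxDim_lt {X : Type*} [PseudoMetricSpace X] {s : Set X}
    (hs : s.Nonempty) {t : ℝ} (ht : 0 < t) (h : upperBoxDim s < ENNReal.ofReal t) :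
    ∀ᶠ ε in 𝓝[>] (0:ℝ), ∃ F : Finset X,
      (s ⊆ ⋃ x ∈ F, ball x ε) ∧ (F.card : ℝ) ≤ ε ^ (-t) := by
  have h1 : ∀ᶠ ε in 𝓝[>] (0:ℝ),
      (if coverNum s ε = ⊤ then (⊤ : ℝ≥0∞)
      else ENNReal.ofReal (Real.log ((coverNum s ε).toNat) / Real.log ε⁻¹)) <
        ENNReal.ofReal t := eventually_lt_of_limsup_lt h
  have h2 : ∀ᶠ ε in 𝓝[>] (0:ℝ), ε ∈ Ioo (0:ℝ) 1 :=
    Ioo_mem_nhdsGT_of_mem ⟨le_refl 0, one_pos⟩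
  filter_upwards [h1, h2] with ε hε hε01
  obtain ⟨hε0, hε1⟩ := hε01
  by_cases htop : coverNum s ε = ⊤
  · rw [if_pos htop] at hε; exact absurd hε (by simp)
  rw [if_neg htop] at hε
  set N := (coverNum s ε).toNat with hN
  have hcN : coverNum s ε = (N : ℕ∞) := (ENat.coe_toNat htop).symm
  -- extract a cover with card ≤ N
  have hlt : coverNum s ε < (N : ℕ∞) + 1 := by
    rw [hcN]
    exact_mod_cast Nat.lt_succ_self N
  rw [coverNum, sInf_lt_iff] at hlt
  obtain ⟨c, ⟨F, hFc, hFcov⟩, hc⟩ := hlt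
  rw [← hFc] at hc
  have hcard : F.card ≤ N := by
    have : (F.card : ℕ∞) < (N:ℕ∞) + 1 := hc
    have h2 : (F.card : ℕ∞) ≤ (N:ℕ∞) := Order.le_of_lt_add_one this
    exact_mod_cast h2
  refine ⟨F, hFcov, ?_⟩
  -- now N ≤ ε ^ (-t)
  have hNpos : 1 ≤ N := by
    by_contra hn
    push_neg at hn
    interval_cases N
    · have : F = ∅ := Finset.card_eq_zero.mp (Nat.le_zero.mp hcard)
      subst this
      obtain ⟨x, hx⟩ := hs
      simpa using hFcov hx
  have hloginv : 0 < Real.log ε⁻¹ := Real.log_pos ((one_lt_inv₀ hε0).mpr hε1)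
  have hlog : Real.log N / Real.log ε⁻¹ < t := by
    rwa [ENNReal.ofReal_lt_ofReal_iff ht] at hε
  have hlog2 : Real.log N < t * Real.log ε⁻¹ := by
    rwa [div_lt_iff₀ hloginv] at hlog
  have hNle : (N : ℝ) ≤ ε ^ (-t) := by
    have hNR : (0:ℝ) < N := by exact_mod_cast hNpos
    have := Real.exp_lt_exp.mpr hlog2
    rw [Real.exp_log hNR] at this
    calc (N:ℝ) ≤ Real.exp (t * Real.log ε⁻¹) := this.le
      _ = (ε⁻¹) ^ t := by
            rw [Real.rpow_def_of_pos (by positivity), mul_comm]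
      _ = ε ^ (-t) := by rw [Real.rpow_neg hε0.le t, ← Real.inv_rpow hε0.le t]
  calc (F.card : ℝ) ≤ N := by exact_mod_cast hcard
    _ ≤ ε ^ (-t) := hNle


lemma contDiff_mvpoly_eval {n : ℕ} (p : MvPolynomial (Fin n) ℝ) :
    ContDiff ℝ 1 (fun x : EuclideanSpace ℝ (Fin n) => MvPolynomial.eval x p) := by
  induction p using MvPolynomial.induction_on with
  | C a => simpa using contDiff_const
  | add p q hp hq => simpa using hp.add hq
  | mul_X p i hp =>
      have hc : ContDiff ℝ 1 (fun x : EuclideanSpace ℝ (Fin n) => x i) :=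
        (EuclideanSpace.proj i : EuclideanSpace ℝ (Fin n) →L[ℝ] ℝ).contDiff
      simpa using hp.mul hc

lemma contDiff_polymap {n m : ℕ} (p : Fin m → MvPolynomial (Fin n) ℝ) :
    ContDiff ℝ 1 (fun x : EuclideanSpace ℝ (Fin n) =>
      (show EuclideanSpace ℝ (Fin m) from WithLp.toLp 2 (fun i => MvPolynomial.eval x (p i)))) :=
  (contDiff_piLp 2).mpr fun i => contDiff_mvpoly_eval (p i)

lemma exists_lipschitzOn_closedBall {n m : ℕ}
    (q : EuclideanSpace ℝ (Fin n) → EuclideanSpace ℝ (Fin m)) (hq : ContDiff ℝ 1 q) (R : ℝ) :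
    ∃ L : ℝ≥0, LipschitzOnWith L q (closedBall 0 R) := by
  have hd : Differentiable ℝ q := hq.differentiable one_ne_zero
  have hcont : ContinuousOn (fun x => ‖fderiv ℝ q x‖) (closedBall 0 R) :=
    ((hq.continuous_fderiv one_ne_zero).norm).continuousOn
  obtain ⟨C, hC⟩ :=
    (isCompact_closedBall (0 : EuclideanSpace ℝ (Fin n)) R).exists_bound_of_continuousOn hcont
  refine ⟨⟨max C 0, le_max_right _ _⟩, ?_⟩
  apply Convex.lipschitzOnWith_of_nnnorm_fderiv_le (fun x _ => hd x) ?_ (convex_closedBall _ _)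
  intro x hx
  have h1 : ‖fderiv ℝ q x‖ ≤ C := by simpa using hC x hx
  apply NNReal.coe_le_coe.mp
  calc (‖fderiv ℝ q x‖₊ : ℝ) = ‖fderiv ℝ q x‖ := rfl
    _ ≤ max C 0 := le_max_of_le_left h1

lemma cover_image_of_lipschitzOn {X Y : Type*} [MetricSpace X] [MetricSpace Y]
    {K D : Set X} {q : X → Y} (hKD : K ⊆ D) {L : ℝ≥0} (hq : LipschitzOnWith L q D)
    {ε : ℝ} (hε : 0 < ε) (F : Finset X) (hF : K ⊆ ⋃ x ∈ F, ball x ε) :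
    ∃ G : Finset Y, (q '' K ⊆ ⋃ y ∈ G, ball y ((2 * L + 1) * ε)) ∧ G.card ≤ F.card := by
  classical
  set g : X → X := fun x => if h : (K ∩ ball x ε).Nonempty then h.choose else x with hg
  refine ⟨F.image (fun x => q (g x)), ?_, Finset.card_image_le⟩
  rintro _ ⟨z, hz, rfl⟩
  obtain ⟨x, hxF, hzx⟩ := by simpa using hF hz
  have hne : (K ∩ ball x ε).Nonempty := ⟨z, hz, hzx⟩
  have hgx : g x ∈ K ∩ ball x ε := by rw [hg]; simp only [dif_pos hne]; exact hne.choose_spec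
  have hdist : dist z (g x) < 2 * ε := by
    have h1 : dist z x < ε := hzx
    have h2 : dist (g x) x < ε := hgx.2
    calc dist z (g x) ≤ dist z x + dist (g x) x := dist_triangle_right _ _ _
      _ < 2 * ε := by linarith
  have hq2 : dist (q z) (q (g x)) < (2 * L + 1) * ε := by
    have h0 := hq.dist_le_mul z (hKD hz) (g x) (hKD hgx.1)
    have h3 : (L : ℝ) * dist z (g x) ≤ (L:ℝ) * (2*ε) :=
      mul_le_mul_of_nonneg_left hdist.le L.coe_nonneg
    nlinarith [L.coe_nonneg]
  have hmem : q (g x) ∈ F.image (fun x => q (g x)) := Finset.mem_image_of_mem _ hxF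
  exact Set.mem_biUnion (Finset.mem_coe.mpr hmem) hq2


variable {m : ℕ}

local notation "Y" => EuclideanSpace ℝ (Fin m)

-- extraction of covers from zero Hausdorff measure
lemma exists_cover_of_hausdorff_zero {A : Set Y} {s : ℝ}
    (hA : μH[s] A = 0) {δ η : ℝ} (hδ : 0 < δ) (hη : 0 < η) :
    ∃ U : ℕ → Set Y, (A ⊆ ⋃ n, U n) ∧ (∀ n, EMetric.diam (U n) ≤ ENNReal.ofReal δ) ∧
      ∑' n, ⨆ _ : (U n).Nonempty, EMetric.diam (U n) ^ s ≤ ENNReal.ofReal η := by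
  have happly := MeasureTheory.Measure.hausdorffMeasure_apply s A
  rw [hA] at happly
  have h0 : (⨅ (U : ℕ → Set Y) (_ : A ⊆ ⋃ n, U n)
      (_ : ∀ n, EMetric.diam (U n) ≤ ENNReal.ofReal δ),
      ∑' n, ⨆ _ : (U n).Nonempty, EMetric.diam (U n) ^ s) = 0 := by
    refine le_antisymm ?_ zero_le
    rw [happly]
    exact le_iSup₂ (f := fun (r : ℝ≥0∞) (_ : 0 < r) =>
      ⨅ (U : ℕ → Set Y) (_ : A ⊆ ⋃ n, U n) (_ : ∀ n, EMetric.diam (U n) ≤ r),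
        ∑' n, ⨆ _ : (U n).Nonempty, EMetric.diam (U n) ^ s)
      (ENNReal.ofReal δ) (ENNReal.ofReal_pos.mpr hδ)
  have hlt : (⨅ (U : ℕ → Set Y) (_ : A ⊆ ⋃ n, U n)
      (_ : ∀ n, EMetric.diam (U n) ≤ ENNReal.ofReal δ),
      ∑' n, ⨆ _ : (U n).Nonempty, EMetric.diam (U n) ^ s) < ENNReal.ofReal η := by
    rw [h0]; exact ENNReal.ofReal_pos.mpr hη
  simp only [iInf_lt_iff] at hlt
  obtain ⟨U, h1, h2, h3⟩ := hlt
  exact ⟨U, h1, h2, h3.le⟩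

lemma hausdorff_zero_sub {A B : Set Y} {s t : ℝ} (hs : 0 < s) (ht : 0 < t)
    (hA : μH[s] A = 0)
    (hB : ∀ᶠ ρ in 𝓝[>] (0:ℝ), ∃ G : Finset Y,
        (B ⊆ ⋃ y ∈ G, ball y ρ) ∧ (G.card : ℝ) ≤ ρ ^ (-t)) :
    μH[s + t] {v : Y | ∃ a ∈ A, ∃ b ∈ B, a - b = v} = 0 := by
  classical
  obtain ⟨δ₀, hδ₀mem, hδ₀⟩ := mem_nhdsGT_iff_exists_Ioo_subset.mp hB
  have hδ₀pos : (0:ℝ) < δ₀ := hδ₀mem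
  -- scales
  set δ : ℕ → ℝ := fun k => min (δ₀ / 2) (1 / (k + 1)) with hδdef
  have hδpos : ∀ k, 0 < δ k := fun k => lt_min (by positivity) (by positivity)
  have hδle : ∀ k, δ k ≤ 1 / (k + 1) := fun k => min_le_right _ _
  have hδlt : ∀ k, δ k < δ₀ := fun k => lt_of_le_of_lt (min_le_left _ _) (by linarith)
  -- covers of A
  have hexU : ∀ k : ℕ, ∃ U : ℕ → Set Y, (A ⊆ ⋃ n, U n) ∧
      (∀ n, EMetric.diam (U n) ≤ ENNReal.ofReal (δ k)) ∧
      ∑' n, ⨆ _ : (U n).Nonempty, EMetric.diam (U n) ^ s ≤ ENNReal.ofReal (1 / (k + 1)) :=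
    fun k => exists_cover_of_hausdorff_zero hA (hδpos k) (by positivity)
  choose U hUcov hUdiam hUsum using hexU
  -- radii
  set r : ℕ → ℕ → ℝ := fun k n =>
    max ((EMetric.diam (U k n)).toReal) (δ k * (1/2) ^ (n+1)) with hrdef
  have hrpos : ∀ k n, 0 < r k n := fun k n =>
    lt_max_of_lt_right (by positivity)
  have hrδ : ∀ k n, r k n ≤ δ k := by
    intro k n
    apply max_le
    · exact ENNReal.toReal_le_of_le_ofReal (hδpos k).le (hUdiam k n)
    · calc δ k * (1/2)^(n+1) ≤ δ k * 1 := by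
            apply mul_le_mul_of_nonneg_left _ (hδpos k).le
            apply pow_le_one₀ <;> norm_num
        _ = δ k := mul_one _
  have hrδ₀ : ∀ k n, r k n ∈ Ioo (0:ℝ) δ₀ := fun k n =>
    ⟨hrpos k n, lt_of_le_of_lt (hrδ k n) (hδlt k)⟩
  -- covers of B at scale r k n
  have hexG : ∀ k n, ∃ G : Finset Y,
      (B ⊆ ⋃ y ∈ G, ball y (r k n)) ∧ (G.card : ℝ) ≤ (r k n) ^ (-t) :=
    fun k n => hδ₀ (hrδ₀ k n)
  choose G hGcov hGcard using hexG
  -- centers in U k n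
  set x : ℕ → ℕ → Y := fun k n => if h : (U k n).Nonempty then h.choose else 0 with hxdef
  have hxmem : ∀ k n, (U k n).Nonempty → x k n ∈ U k n := by
    intro k n h; simp only [hxdef]; simp only [dif_pos h]; exact h.choose_spec
  -- the covering family of S
  set c : ℕ → ℕ × ℕ → Set Y := fun k p =>
    if (U k p.1).Nonempty ∧ p.2 < (G k p.1).toList.length then
      closedBall (x k p.1 - (G k p.1).toList.getD p.2 0) (2 * r k p.1) else ∅ with hcdef
  -- diameter bounds
  have hcdiam : ∀ k p, EMetric.diam (c k p) ≤ ENNReal.ofReal (4 * r k p.1) := by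
    intro k p
    simp only [hcdef]
    split_ifs with hcond
    · apply EMetric.diam_le
      intro u hu w hw
      rw [edist_dist]
      apply ENNReal.ofReal_le_ofReal
      calc dist u w ≤ dist u (x k p.1 - (G k p.1).toList.getD p.2 0)
            + dist w (x k p.1 - (G k p.1).toList.getD p.2 0) := dist_triangle_right _ _ _
        _ ≤ 2 * r k p.1 + 2 * r k p.1 := add_le_add hu hw
        _ = 4 * r k p.1 := by ring
    · simp [EMetric.diam]
  have hcdiam' : ∀ k p, EMetric.diam (c k p) ≤ ENNReal.ofReal (4 * δ k) := by
    intro k p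
    refine le_trans (hcdiam k p) (ENNReal.ofReal_le_ofReal ?_)
    have := hrδ k p.1; linarith
  -- covering property
  have hccov : ∀ k, {v : Y | ∃ a ∈ A, ∃ b ∈ B, a - b = v} ⊆ ⋃ p : ℕ × ℕ, c k p := by
    intro k v hv
    obtain ⟨a, ha, b, hb, rfl⟩ := hv
    obtain ⟨n, haU⟩ := mem_iUnion.mp (hUcov k ha)
    have hne : (U k n).Nonempty := ⟨a, haU⟩
    obtain ⟨y, hyG, hby⟩ := by simpa using hGcov k n hb
    obtain ⟨j, hj, hjy⟩ := List.mem_iff_getElem.mp (Finset.mem_toList.mpr hyG)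
    refine mem_iUnion.mpr ⟨(n, j), ?_⟩
    simp only [hcdef]
    have hcond : (U k n).Nonempty ∧ j < (G k n).toList.length := ⟨hne, hj⟩
    rw [if_pos hcond]
    have hgetD : (G k n).toList.getD j 0 = y := by
      rw [List.getD_eq_getElem _ _ hj, hjy]
    rw [hgetD]
    rw [mem_closedBall]
    have h1 : dist a (x k n) ≤ r k n := by
      have he : edist a (x k n) ≤ EMetric.diam (U k n) :=
        EMetric.edist_le_diam_of_mem haU (hxmem k n hne)
      have hfin : EMetric.diam (U k n) ≠ ⊤ :=
        ne_top_of_le_ne_top ENNReal.ofReal_ne_top (hUdiam k n)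
      calc dist a (x k n) = (edist a (x k n)).toReal := by rw [dist_edist]
        _ ≤ (EMetric.diam (U k n)).toReal := ENNReal.toReal_mono hfin he
        _ ≤ r k n := le_max_left _ _
    have h2 : dist b y ≤ r k n := (mem_ball.mp hby).le
    calc dist (a - b) (x k n - y) = ‖(a - b) - (x k n - y)‖ := by rw [dist_eq_norm]
      _ = ‖(a - x k n) - (b - y)‖ := by rw [sub_sub_sub_comm]
      _ ≤ ‖a - x k n‖ + ‖b - y‖ := norm_sub_le _ _
      _ = dist a (x k n) + dist b y := by rw [dist_eq_norm, dist_eq_norm]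
      _ ≤ 2 * r k n := by linarith
  -- apply the liminf bound
  have hrr : Tendsto (fun k : ℕ => ENNReal.ofReal (4 * δ k)) atTop (𝓝 0) := by
    rw [show (0:ℝ≥0∞) = ENNReal.ofReal 0 by simp]
    apply ENNReal.tendsto_ofReal
    have hb : Tendsto (fun k : ℕ => 4 * (1 / (k+1) : ℝ)) atTop (𝓝 0) := by
      rw [show (0:ℝ) = 4 * 0 by ring]
      exact tendsto_one_div_add_atTop_nhds_zero_nat.const_mul 4
    exact squeeze_zero (fun k => by positivity)
      (fun k => mul_le_mul_of_nonneg_left (hδle k) (by norm_num)) hb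
  have hmain := MeasureTheory.Measure.hausdorffMeasure_le_liminf_tsum (s + t)
    {v : Y | ∃ a ∈ A, ∃ b ∈ B, a - b = v}
    (fun k : ℕ => ENNReal.ofReal (4 * δ k)) hrr c
    (Eventually.of_forall fun k => hcdiam' k)
    (Eventually.of_forall hccov)
  -- bound the sums
  set w : ℝ≥0∞ := ENNReal.ofReal ((1/2 : ℝ) ^ s) with hwdef
  have hwlt : w < 1 := by
    rw [hwdef]
    apply lt_of_lt_of_le (b := ENNReal.ofReal 1)
    · exact ENNReal.ofReal_lt_ofReal_iff_of_nonneg (by positivity) |>.mpr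
        (Real.rpow_lt_one (by norm_num) (by norm_num) hs)
    · simp
  set Cgeo : ℝ≥0∞ := ∑' n : ℕ, w ^ (n + 1) with hCgeodef
  have hCgeo : Cgeo ≠ ⊤ := by
    rw [hCgeodef, ENNReal.tsum_geometric_add_one]
    exact ENNReal.mul_ne_top (ne_top_of_lt hwlt)
      (ENNReal.inv_ne_top.mpr (by simp [tsub_eq_zero_iff_le, not_le, hwlt]))
  have hsum : ∀ k, (∑' p : ℕ × ℕ, EMetric.diam (c k p) ^ (s + t)) ≤
      ENNReal.ofReal (4 ^ (s+t) : ℝ) *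
        (ENNReal.ofReal (1 / (k+1)) + ENNReal.ofReal (δ k ^ s) * Cgeo) := by
    intro k
    rw [ENNReal.tsum_prod']
    have hinner : ∀ n, (∑' j : ℕ, EMetric.diam (c k (n, j)) ^ (s + t)) ≤
        (⨆ _ : (U k n).Nonempty,
          ENNReal.ofReal ((4:ℝ) ^ (s+t)) * ENNReal.ofReal (r k n ^ s)) := by
      intro n
      by_cases hne : (U k n).Nonempty
      · rw [iSup_pos hne]
        set L := (G k n).toList.length with hLdef
        have hterm : ∀ j, EMetric.diam (c k (n, j)) ^ (s + t) ≤
            (if j < L then ENNReal.ofReal ((4 * r k n) ^ (s+t)) else 0) := by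
          intro j
          split_ifs with hj
          · calc EMetric.diam (c k (n,j)) ^ (s+t)
                ≤ (ENNReal.ofReal (4 * r k n)) ^ (s+t) :=
                  ENNReal.rpow_le_rpow (hcdiam k (n,j)) (by positivity)
              _ = ENNReal.ofReal ((4 * r k n) ^ (s+t)) :=
                  ENNReal.ofReal_rpow_of_nonneg (by positivity) (by positivity)
          · have : c k (n, j) = ∅ := by
              simp only [hcdef]; exact if_neg (by tauto)
            rw [this]
            simp [EMetric.diam, ENNReal.zero_rpow_of_pos (by positivity : (0:ℝ) < s + t)]
        calc (∑' j : ℕ, EMetric.diam (c k (n, j)) ^ (s + t))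
            ≤ ∑' j : ℕ, (if j < L then ENNReal.ofReal ((4 * r k n) ^ (s+t)) else 0) :=
              ENNReal.tsum_le_tsum hterm
          _ = ∑ j ∈ Finset.range L, (if j < L then ENNReal.ofReal ((4 * r k n) ^ (s+t)) else 0) := by
              apply tsum_eq_sum
              intro j hj
              rw [if_neg (by simpa using hj)]
          _ = L * ENNReal.ofReal ((4 * r k n) ^ (s+t)) := by
              rw [Finset.sum_congr rfl (fun j hj => if_pos (Finset.mem_range.mp hj))]
              rw [Finset.sum_const, Finset.card_range, nsmul_eq_mul]
          _ ≤ ENNReal.ofReal ((r k n) ^ (-t)) * ENNReal.ofReal ((4 * r k n) ^ (s+t)) := by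
              apply mul_le_mul_left
              rw [show ((L:ℝ≥0∞)) = ENNReal.ofReal (L:ℝ) by simp]
              apply ENNReal.ofReal_le_ofReal
              rw [hLdef, Finset.length_toList]
              exact hGcard k n
          _ = ENNReal.ofReal ((4:ℝ) ^ (s+t)) * ENNReal.ofReal (r k n ^ s) := by
              rw [← ENNReal.ofReal_mul (by positivity), ← ENNReal.ofReal_mul (by positivity)]
              congr 1
              rw [Real.mul_rpow (by norm_num) (hrpos k n).le]
              rw [show (r k n) ^ (-t) * ((4:ℝ) ^ (s+t) * (r k n) ^ (s+t))
                  = (4:ℝ)^(s+t) * ((r k n) ^ (-t) * (r k n) ^ (s+t)) by ring]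
              rw [← Real.rpow_add (hrpos k n)]
              congr 1
              ring_nf
      · have : ∀ j, c k (n, j) = ∅ := by
          intro j; simp only [hcdef]; exact if_neg (by tauto)
        simp [this, EMetric.diam, ENNReal.zero_rpow_of_pos (by positivity : (0:ℝ) < s + t), hne]
    calc (∑' n, ∑' j, EMetric.diam (c k (n, j)) ^ (s + t))
        ≤ ∑' n, (⨆ _ : (U k n).Nonempty,
            ENNReal.ofReal ((4:ℝ) ^ (s+t)) * ENNReal.ofReal (r k n ^ s)) :=
          ENNReal.tsum_le_tsum hinner
      _ ≤ ∑' n, (ENNReal.ofReal ((4:ℝ) ^ (s+t)) *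
            ((⨆ _ : (U k n).Nonempty, EMetric.diam (U k n) ^ s)
              + ENNReal.ofReal ((δ k * (1/2)^(n+1)) ^ s))) := by
          apply ENNReal.tsum_le_tsum
          intro n
          apply iSup_le
          intro hne
          apply mul_le_mul_right
          rw [iSup_pos hne]
          have hmax : r k n ^ s ≤ (EMetric.diam (U k n)).toReal ^ s
              + (δ k * (1/2)^(n+1)) ^ s := by
            rcases max_cases ((EMetric.diam (U k n)).toReal) (δ k * (1/2)^(n+1)) with h | h
            · simp only [hrdef]
              rw [h.1]
              have : (0:ℝ) ≤ (δ k * (1/2)^(n+1)) ^ s := by positivity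
              linarith
            · simp only [hrdef]
              rw [h.1]
              have : (0:ℝ) ≤ (EMetric.diam (U k n)).toReal ^ s := by positivity
              linarith
          calc ENNReal.ofReal (r k n ^ s)
              ≤ ENNReal.ofReal ((EMetric.diam (U k n)).toReal ^ s
                  + (δ k * (1/2)^(n+1)) ^ s) := ENNReal.ofReal_le_ofReal hmax
            _ ≤ ENNReal.ofReal ((EMetric.diam (U k n)).toReal ^ s)
                  + ENNReal.ofReal ((δ k * (1/2)^(n+1)) ^ s) := ENNReal.ofReal_add_le
            _ = EMetric.diam (U k n) ^ s + ENNReal.ofReal ((δ k * (1/2)^(n+1)) ^ s) := by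
                congr 1
                have hfin : EMetric.diam (U k n) ≠ ⊤ :=
                  ne_top_of_le_ne_top ENNReal.ofReal_ne_top (hUdiam k n)
                rw [← ENNReal.ofReal_rpow_of_nonneg ENNReal.toReal_nonneg hs.le]
                rw [ENNReal.ofReal_toReal hfin]
      _ = ENNReal.ofReal ((4:ℝ) ^ (s+t)) *
            ((∑' n, ⨆ _ : (U k n).Nonempty, EMetric.diam (U k n) ^ s)
              + ∑' n, ENNReal.ofReal ((δ k * (1/2)^(n+1)) ^ s)) := by
          rw [ENNReal.tsum_mul_left, ENNReal.tsum_add]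
      _ ≤ ENNReal.ofReal ((4:ℝ) ^ (s+t)) *
            (ENNReal.ofReal (1 / (k+1)) + ENNReal.ofReal (δ k ^ s) * Cgeo) := by
          apply mul_le_mul_right
          apply add_le_add (hUsum k)
          have heq : ∀ n : ℕ, ENNReal.ofReal ((δ k * (1/2)^(n+1)) ^ s)
              = ENNReal.ofReal (δ k ^ s) * w ^ (n+1) := by
            intro n
            have h2 : ((1/2 : ℝ) ^ (n+1)) ^ s = ((1/2 : ℝ) ^ s) ^ (n+1) := by
              rw [← Real.rpow_natCast (1/2 : ℝ) (n+1), ← Real.rpow_mul (by norm_num), mul_comm,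
                  Real.rpow_mul (by norm_num), Real.rpow_natCast]
            rw [Real.mul_rpow (hδpos k).le (by positivity), h2,
                ENNReal.ofReal_mul (by positivity),
                ENNReal.ofReal_pow (by positivity), hwdef]
          apply le_of_eq
          calc ∑' (n:ℕ), ENNReal.ofReal ((δ k * (1/2)^(n+1)) ^ s)
              = ∑' (n:ℕ), ENNReal.ofReal (δ k ^ s) * w ^ (n+1) := tsum_congr heq
            _ = ENNReal.ofReal (δ k ^ s) * Cgeo := by rw [ENNReal.tsum_mul_left, hCgeodef]
  -- limit of the bounds
  have hglim : Tendsto (fun k : ℕ => ENNReal.ofReal ((4:ℝ) ^ (s+t)) *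
      (ENNReal.ofReal (1 / (k+1)) + ENNReal.ofReal (δ k ^ s) * Cgeo)) atTop (𝓝 0) := by
    have h1 : Tendsto (fun k : ℕ => ENNReal.ofReal (1 / ((k:ℝ)+1))) atTop (𝓝 0) := by
      rw [show (0:ℝ≥0∞) = ENNReal.ofReal 0 by simp]
      exact ENNReal.tendsto_ofReal tendsto_one_div_add_atTop_nhds_zero_nat
    have h2 : Tendsto (fun k : ℕ => ENNReal.ofReal (δ k ^ s)) atTop (𝓝 0) := by
      rw [show (0:ℝ≥0∞) = ENNReal.ofReal 0 by simp]
      apply ENNReal.tendsto_ofReal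
      have hb : Tendsto (fun k : ℕ => ((1:ℝ) / (k+1)) ^ s) atTop (𝓝 0) := by
        have hc : ContinuousAt (fun z : ℝ => z ^ s) 0 :=
          Real.continuousAt_rpow_const 0 s (Or.inr hs.le)
        have hcomp := hc.tendsto.comp tendsto_one_div_add_atTop_nhds_zero_nat
        simpa [Real.zero_rpow hs.ne', Function.comp_def] using hcomp
      apply squeeze_zero (fun k => by positivity) (fun k => ?_) hb
      exact Real.rpow_le_rpow (hδpos k).le (hδle k) hs.le
    have h3 : Tendsto (fun k : ℕ => ENNReal.ofReal (δ k ^ s) * Cgeo) atTop (𝓝 0) := by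
      have hmc := ENNReal.Tendsto.mul_const h2 (Or.inr hCgeo)
      simpa using hmc
    have h4 : Tendsto (fun k : ℕ => ENNReal.ofReal (1 / ((k:ℝ)+1))
        + ENNReal.ofReal (δ k ^ s) * Cgeo) atTop (𝓝 0) := by
      have := h1.add h3
      simpa using this
    have h5 := ENNReal.Tendsto.const_mul (a := ENNReal.ofReal ((4:ℝ) ^ (s+t))) h4
      (Or.inr ENNReal.ofReal_ne_top)
    simpa using h5
  refine le_antisymm ?_ zero_le
  calc μH[s+t] {v : Y | ∃ a ∈ A, ∃ b ∈ B, a - b = v}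
      ≤ liminf (fun k => ∑' p : ℕ × ℕ, EMetric.diam (c k p) ^ (s+t)) atTop := hmain
    _ ≤ liminf (fun k : ℕ => ENNReal.ofReal ((4:ℝ)^(s+t)) *
          (ENNReal.ofReal (1/((k:ℝ)+1)) + ENNReal.ofReal (δ k ^ s) * Cgeo)) atTop :=
        liminf_le_liminf (Eventually.of_forall hsum)
    _ = 0 := hglim.liminf_eq


lemma phi_apply {n : ℕ} {K : Set (EuclideanSpace ℝ (Fin n))}
    (coord : Fin n → C(K, ℝ)) (hcoord : ∀ i (z : K), coord i z = (z : EuclideanSpace ℝ (Fin n)) i)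
    (q : MvPolynomial (Fin n) ℝ) (z : K) :
    (MvPolynomial.aeval coord q) z = MvPolynomial.eval (z : EuclideanSpace ℝ (Fin n)) q := by
  induction q using MvPolynomial.induction_on with
  | C a => simp
  | add p q hp hq => simp [hp, hq]
  | mul_X p i hp => simp [hp, hcoord]

lemma exists_poly_approx {n m : ℕ} {K : Set (EuclideanSpace ℝ (Fin n))} (hK : IsCompact K)
    {f : EuclideanSpace ℝ (Fin n) → EuclideanSpace ℝ (Fin m)} (hf : ContinuousOn f K)
    {ε' : ℝ} (hε' : 0 < ε') :
    ∃ q : Fin m → MvPolynomial (Fin n) ℝ,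
      ∀ x ∈ K, ∀ i, |f x i - MvPolynomial.eval x (q i)| < ε' := by
  haveI : CompactSpace K := isCompact_iff_compactSpace.mp hK
  set coord : Fin n → C(K, ℝ) := fun i =>
    ⟨fun z => (z : EuclideanSpace ℝ (Fin n)) i,
      (EuclideanSpace.proj (𝕜 := ℝ) i).continuous.comp continuous_subtype_val⟩ with hcoorddef
  have hcoord : ∀ i (z : K), coord i z = (z : EuclideanSpace ℝ (Fin n)) i := fun i z => rfl
  set Φ : MvPolynomial (Fin n) ℝ →ₐ[ℝ] C(K, ℝ) := MvPolynomial.aeval coord with hΦdef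
  have hsep : (Φ.range : Subalgebra ℝ C(K, ℝ)).SeparatesPoints := by
    intro z w hzw
    have : ∃ i, (z : EuclideanSpace ℝ (Fin n)) i ≠ (w : EuclideanSpace ℝ (Fin n)) i := by
      by_contra h
      push_neg at h
      exact hzw (Subtype.coe_injective (PiLp.ext h))
    obtain ⟨i, hi⟩ := this
    exact ⟨coord i, ⟨coord i, (AlgHom.mem_range Φ).mpr ⟨MvPolynomial.X i, by simp [hΦdef]⟩, rfl⟩,
      by simpa [hcoord] using hi⟩
  have hex : ∀ i : Fin m, ∃ q : MvPolynomial (Fin n) ℝ,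
      ∀ x ∈ K, |f x i - MvPolynomial.eval x q| < ε' := by
    intro i
    have hcont : Continuous (fun z : K => f z i) :=
      (EuclideanSpace.proj (𝕜 := ℝ) i).continuous.comp hf.restrict
    obtain ⟨g, hg⟩ := ContinuousMap.exists_mem_subalgebra_near_continuous_of_separatesPoints
      Φ.range hsep (fun z : K => f z i) hcont ε' hε'
    obtain ⟨q, hq⟩ := (AlgHom.mem_range Φ).mp g.2
    refine ⟨q, fun x hx => ?_⟩
    have := hg ⟨x, hx⟩
    rw [← hq] at this
    rw [phi_apply coord hcoord q ⟨x, hx⟩] at this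
    simpa [abs_sub_comm] using this
  choose q hq using hex
  exact ⟨q, fun x hx i => hq i x hx⟩

lemma euclid_norm_le {m : ℕ} (w : EuclideanSpace ℝ (Fin m)) (a : ℝ) (ha : 0 ≤ a)
    (h : ∀ i, |w i| ≤ a) : ‖w‖ ≤ Real.sqrt m * a := by
  rw [EuclideanSpace.norm_eq]
  have h1 : ∑ i, ‖w i‖ ^ 2 ≤ ∑ _i : Fin m, a ^ 2 := by
    apply Finset.sum_le_sum
    intro i _
    have := h i
    rw [Real.norm_eq_abs]
    nlinarith [abs_nonneg (w i)]
  calc Real.sqrt (∑ i, ‖w i‖ ^ 2) ≤ Real.sqrt (∑ _i : Fin m, a ^ 2) := Real.sqrt_le_sqrt h1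
    _ = Real.sqrt (m * a ^ 2) := by rw [Finset.sum_const, Finset.card_univ, Fintype.card_fin,
          nsmul_eq_mul]
    _ = Real.sqrt m * a := by
        rw [Real.sqrt_mul (by positivity), Real.sqrt_sq ha]


theorem weierstrass_avoids_small_dim (n m : ℕ)
    (K : Set (EuclideanSpace ℝ (Fin n))) (hK : IsCompact K)
    (A : Set (EuclideanSpace ℝ (Fin m)))
    (hdim : upperBoxDim K + dimH A < (m : ℝ≥0∞))
    (f : EuclideanSpace ℝ (Fin n) → EuclideanSpace ℝ (Fin m)) (hf : ContinuousOn f K)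
    (ε : ℝ) (hε : 0 < ε) :
    ∃ p : Fin m → MvPolynomial (Fin n) ℝ,
      (∀ x ∈ K, (show EuclideanSpace ℝ (Fin m) from WithLp.toLp 2 (fun i => MvPolynomial.eval x (p i))) ∉ A) ∧
      ∀ x ∈ K,
        ‖f x - (show EuclideanSpace ℝ (Fin m) from WithLp.toLp 2 (fun i => MvPolynomial.eval x (p i)))‖ < ε := by
  classical
  rcases Nat.eq_zero_or_pos m with rfl | hmpos
  · exact absurd hdim (by simp)
  by_cases hKne : K.Nonempty
  swap
  · rw [Set.not_nonempty_iff_eq_empty] at hKne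
    refine ⟨fun _ => 0, ?_, ?_⟩ <;> intro x hx <;> rw [hKne] at hx <;>
      exact absurd hx (Set.notMem_empty x)
  -- dimensions
  have hmtop : ((m:ℕ) : ℝ≥0∞) ≠ ⊤ := by simp
  have hbox : upperBoxDim K < (m : ℝ≥0∞) := lt_of_le_of_lt le_self_add hdim
  have hdA : dimH A < (m : ℝ≥0∞) := lt_of_le_of_lt le_add_self hdim
  have hne1 : upperBoxDim K ≠ ⊤ := ne_top_of_lt hbox
  have hne2 : dimH A ≠ ⊤ := ne_top_of_lt hdA
  set d0 : ℝ := (upperBoxDim K).toReal with hd0def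
  set dA : ℝ := (dimH A).toReal with hdAdef
  have hd0nn : 0 ≤ d0 := ENNReal.toReal_nonneg
  have hdAnn : 0 ≤ dA := ENNReal.toReal_nonneg
  have hsumlt : d0 + dA < m := by
    have h := (ENNReal.toReal_lt_toReal (ENNReal.add_ne_top.mpr ⟨hne1, hne2⟩) hmtop).mpr hdim
    rwa [ENNReal.toReal_add hne1 hne2, ENNReal.toReal_natCast] at h
  set θ : ℝ := ((m:ℝ) - d0 - dA) / 3 with hθdef
  have hθpos : 0 < θ := by rw [hθdef]; linarith
  set s : ℝ := dA + θ with hsdef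
  set t : ℝ := d0 + θ with htdef
  set t2 : ℝ := t + θ/2 with ht2def
  have hspos : 0 < s := by positivity
  have htpos : 0 < t := by positivity
  have ht2pos : 0 < t2 := by positivity
  have hst2 : s + t2 < m := by rw [hsdef, ht2def, htdef]; linarith
  have hAlt : dimH A < ENNReal.ofReal s := by
    have : dimH A = ENNReal.ofReal dA := by
      rw [hdAdef, ENNReal.ofReal_toReal hne2]
    rw [this]
    exact (ENNReal.ofReal_lt_ofReal_iff hspos).mpr (by rw [hsdef]; linarith)
  have hKlt : upperBoxDim K < ENNReal.ofReal t := by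
    have : upperBoxDim K = ENNReal.ofReal d0 := by
      rw [hd0def, ENNReal.ofReal_toReal hne1]
    rw [this]
    exact (ENNReal.ofReal_lt_ofReal_iff htpos).mpr (by rw [htdef]; linarith)
  have hAzero : μH[s] A = 0 := by
    have h := hausdorffMeasure_of_dimH_lt (s := A) (d := s.toNNReal)
      (by rw [show ((s.toNNReal : ℝ≥0) : ℝ≥0∞) = ENNReal.ofReal s from rfl]; exact hAlt)
    rwa [Real.coe_toNNReal s hspos.le] at h
  -- Weierstrass approximation
  set ε' : ℝ := ε / (2 * (Real.sqrt m + 1)) with hε'def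
  have hε'pos : 0 < ε' := by
    rw [hε'def]
    have : (0:ℝ) < Real.sqrt m + 1 := by positivity
    positivity
  obtain ⟨q, hq⟩ := exists_poly_approx (m := m) hK hf hε'pos
  set Q : EuclideanSpace ℝ (Fin n) → EuclideanSpace ℝ (Fin m) :=
    fun x => (show EuclideanSpace ℝ (Fin m) from WithLp.toLp 2 (fun i => MvPolynomial.eval x (q i))) with hQdef
  have hQnear : ∀ x ∈ K, ‖f x - Q x‖ < ε / 2 := by
    intro x hx
    have hbound : ∀ i, |(f x - Q x) i| ≤ ε' := by
      intro i
      have : (f x - Q x) i = f x i - MvPolynomial.eval x (q i) := by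
        simp [hQdef, PiLp.sub_apply]
      rw [this]
      exact (hq x hx i).le
    calc ‖f x - Q x‖ ≤ Real.sqrt m * ε' := euclid_norm_le _ _ hε'pos.le hbound
      _ < ε / 2 := by
          have hsq : (0:ℝ) ≤ Real.sqrt m := Real.sqrt_nonneg _
          have h1 : Real.sqrt m / (Real.sqrt m + 1) < 1 := by
            rw [div_lt_one (by positivity)]; linarith
          calc Real.sqrt m * ε'
              = (Real.sqrt m / (Real.sqrt m + 1)) * (ε/2) := by
                rw [hε'def]
                have hne : Real.sqrt m + 1 ≠ 0 := by positivity
                field_simp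
            _ < 1 * (ε/2) := mul_lt_mul_of_pos_right h1 (by positivity)
            _ = ε / 2 := one_mul _
  -- Lipschitz bound for Q on a ball containing K
  obtain ⟨R, hR⟩ := hK.isBounded.subset_closedBall 0
  obtain ⟨L, hL⟩ := exists_lipschitzOn_closedBall Q (contDiff_polymap q) R
  set B : Set (EuclideanSpace ℝ (Fin m)) := Q '' K with hBdef
  -- eventual covering bound for B with exponent t2
  set c : ℝ := 2 * (L:ℝ) + 1 with hcdef
  have hc1 : (1:ℝ) ≤ c := by rw [hcdef]; have := L.coe_nonneg; linarith
  have hcpos : (0:ℝ) < c := lt_of_lt_of_le one_pos hc1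
  set ρ₁ : ℝ := c ^ (-(2 * t / θ)) with hρ₁def
  have hρ₁pos : 0 < ρ₁ := Real.rpow_pos_of_pos hcpos _
  have hE := exists_cover_of_upperBoxDim_lt hKne htpos hKlt
  have hscale : Tendsto (fun ρ : ℝ => ρ / c) (𝓝[>] 0) (𝓝[>] 0) := by
    apply tendsto_nhdsWithin_of_tendsto_nhds_of_eventually_within
    · have h := (continuous_id.div_const c).tendsto (0:ℝ)
      simpa using h.mono_left nhdsWithin_le_nhds
    · filter_upwards [self_mem_nhdsWithin] with ρ hρ
      exact div_pos hρ hcpos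
  have hEρ := hscale.eventually hE
  have hsmall : ∀ᶠ ρ in 𝓝[>] (0:ℝ), ρ ∈ Ioo (0:ℝ) ρ₁ :=
    Ioo_mem_nhdsGT_of_mem ⟨le_refl 0, hρ₁pos⟩
  have hBcov : ∀ᶠ ρ in 𝓝[>] (0:ℝ), ∃ G : Finset (EuclideanSpace ℝ (Fin m)),
      (B ⊆ ⋃ y ∈ G, ball y ρ) ∧ (G.card : ℝ) ≤ ρ ^ (-t2) := by
    filter_upwards [hEρ, hsmall] with ρ hF hρm
    obtain ⟨hρ0, hρρ₁⟩ := hρm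
    obtain ⟨F, hFcov, hFcard⟩ := hF
    have hρc : 0 < ρ / c := div_pos hρ0 hcpos
    obtain ⟨G, hGcov, hGcard⟩ := cover_image_of_lipschitzOn hR hL hρc F hFcov
    have hrad : (2 * (L:ℝ) + 1) * (ρ / c) = ρ := by
      rw [← hcdef]; field_simp
    rw [hrad] at hGcov
    refine ⟨G, hGcov, ?_⟩
    have h1 : (G.card : ℝ) ≤ (ρ / c) ^ (-t) := le_trans (by exact_mod_cast hGcard) hFcard
    have h2 : (ρ / c) ^ (-t) = ρ ^ (-t) * c ^ t := by
      rw [Real.div_rpow hρ0.le hcpos.le, Real.rpow_neg hcpos.le, div_eq_mul_inv, inv_inv]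
    have h3 : c ^ t ≤ ρ ^ (-(θ/2)) := by
      have hle : ρ ^ (-(θ/2)) ≥ ρ₁ ^ (-(θ/2)) :=
        Real.rpow_le_rpow_of_nonpos hρ0 hρρ₁.le (by linarith)
      have heq : ρ₁ ^ (-(θ/2)) = c ^ t := by
        rw [hρ₁def, ← Real.rpow_mul hcpos.le]
        congr 1
        field_simp
      linarith [hle, heq.symm.le]
    calc (G.card : ℝ) ≤ (ρ / c) ^ (-t) := h1
      _ = ρ ^ (-t) * c ^ t := h2
      _ ≤ ρ ^ (-t) * ρ ^ (-(θ/2)) := by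
          apply mul_le_mul_of_nonneg_left h3 (Real.rpow_nonneg hρ0.le _)
      _ = ρ ^ (-t2) := by
          rw [← Real.rpow_add hρ0, ht2def]
          congr 1
          ring
  -- the bad set has measure zero, hence small dimension, hence dense complement
  have hS := hausdorff_zero_sub hspos ht2pos hAzero hBcov
  set S : Set (EuclideanSpace ℝ (Fin m)) := {v | ∃ a ∈ A, ∃ b ∈ B, a - b = v} with hSdef
  have hdimS : dimH S ≤ ENNReal.ofReal (s + t2) := by
    by_contra h
    push_neg at h
    have h2 := hausdorffMeasure_of_lt_dimH (s := S) (d := (s+t2).toNNReal)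
      (by rw [show (((s+t2).toNNReal : ℝ≥0) : ℝ≥0∞) = ENNReal.ofReal (s+t2) from rfl]; exact h)
    rw [Real.coe_toNNReal _ (by positivity)] at h2
    rw [hS] at h2
    simp at h2
  have hdense : Dense Sᶜ := by
    apply dense_compl_of_dimH_lt_finrank
    have hfin : Module.finrank ℝ (EuclideanSpace ℝ (Fin m)) = m := finrank_euclideanSpace_fin
    rw [hfin]
    calc dimH S ≤ ENNReal.ofReal (s + t2) := hdimS
      _ < ((m:ℕ) : ℝ≥0∞) := by
          rw [show ((m:ℕ) : ℝ≥0∞) = ENNReal.ofReal (m:ℝ) by simp [ENNReal.ofReal_natCast]]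
          exact (ENNReal.ofReal_lt_ofReal_iff (by positivity)).mpr hst2
  -- choose a good translation v
  have hball : (ball (0 : EuclideanSpace ℝ (Fin m)) (ε/2)).Nonempty :=
    ⟨0, mem_ball_self (by positivity)⟩
  obtain ⟨v, hv1, hv2⟩ := hdense.exists_mem_open isOpen_ball hball
  -- hv1 : v ∈ Sᶜ? or order; adjust below
  refine ⟨fun i => q i + MvPolynomial.C (v i), ?_, ?_⟩
  · intro x hx hmem
    have hPev : (show EuclideanSpace ℝ (Fin m) from
        WithLp.toLp 2 (fun i => MvPolynomial.eval x (q i + MvPolynomial.C (v i)))) = Q x + v := by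
      ext i
      simp [hQdef, PiLp.add_apply]
    rw [hPev] at hmem
    apply hv1
    rw [hSdef]
    exact ⟨Q x + v, hmem, Q x, ⟨x, hx, rfl⟩, by abel⟩
  · intro x hx
    have hPev : (show EuclideanSpace ℝ (Fin m) from
        WithLp.toLp 2 (fun i => MvPolynomial.eval x (q i + MvPolynomial.C (v i)))) = Q x + v := by
      ext i
      simp [hQdef, PiLp.add_apply]
    rw [hPev]
    have hvnorm : ‖v‖ < ε / 2 := by simpa using mem_ball_zero_iff.mp hv2
    calc ‖f x - (Q x + v)‖ = ‖(f x - Q x) - v‖ := by abel_nf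
      _ ≤ ‖f x - Q x‖ + ‖v‖ := norm_sub_le _ _
      _ < ε/2 + ε/2 := add_lt_add (hQnear x hx) hvnorm
      _ = ε := by ring
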